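/- Let (T,φ,η,μ) be a symmetric monoidal monad on a symmetric monoidal category (V,⊗,I) and let Z₁, Z₂ be objects of V. Set α = T(μ_{Z₁} ⊗ μ_{Z₂}) and β = μ_{TZ₁⊗TZ₂} ∘ T(φ_{TZ₁,TZ₂}), both morphisms T(T²Z₁ ⊗ T²Z₂) → T(TZ₁ ⊗ TZ₂), and set q = μ_{Z₁⊗Z₂} ∘ T(φ_{Z₁,Z₂}) : T(TZ₁ ⊗ TZ₂) → T(Z₁ ⊗ Z₂). Then q ∘ α = q ∘ β, and the morphisms s = T(η_{Z₁} ⊗ η_{Z₂}) : T(Z₁ ⊗ Z₂) → T(TZ₁ ⊗ TZ₂) and t = T(Tη_{Z₁} ⊗ Tη_{Z₂}) : T(TZ₁ ⊗ TZ₂) → T(T²Z₁ ⊗ T²Z₂) exhibit q as a split coequalizer of α and β: q ∘ s = 1, α ∘ t = 1, and β ∘ t = s ∘ q. In particular q is the (absolute) coequalizer of α and β. -/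

import Mathlib

open CategoryTheory MonoidalCategory Limits

universe v u

/-- The data and axioms of a symmetric monoidal (= commutative) monad on a symmetric
monoidal category: a lax symmetric monoidal structure `(φ, ε)` on the underlying
endofunctor of the monad `T`, for which the unit `η` and the multiplication `μ` of the
monad are monoidal natural transformations. -/
structure SymMonoidalMonadStr (C : Type u) [Category.{v} C] [MonoidalCategory C]
    [SymmetricCategory C] (T : Monad C) where
  /-- the binary coherence maps of the lax monoidal structure -/
  φ : ∀ A B : C, T.obj A ⊗ T.obj B ⟶ T.obj (A ⊗ B)
  /-- the nullary coherence map of the lax monoidal structure -/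
  ε : 𝟙_ C ⟶ T.obj (𝟙_ C)
  φ_natural : ∀ {A B A' B' : C} (f : A ⟶ A') (g : B ⟶ B'),
    (T.map f ⊗ₘ T.map g) ≫ φ A' B' = φ A B ≫ T.map (f ⊗ₘ g)
  φ_assoc : ∀ A B C' : C,
    (φ A B ⊗ₘ 𝟙 (T.obj C')) ≫ φ (A ⊗ B) C' ≫ T.map (α_ A B C').hom
      = (α_ (T.obj A) (T.obj B) (T.obj C')).hom ≫ (𝟙 (T.obj A) ⊗ₘ φ B C') ≫ φ A (B ⊗ C')
  φ_left_unit : ∀ A : C,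
    (λ_ (T.obj A)).hom = (ε ⊗ₘ 𝟙 (T.obj A)) ≫ φ (𝟙_ C) A ≫ T.map (λ_ A).hom
  φ_right_unit : ∀ A : C,
    (ρ_ (T.obj A)).hom = (𝟙 (T.obj A) ⊗ₘ ε) ≫ φ A (𝟙_ C) ≫ T.map (ρ_ A).hom
  φ_braided : ∀ A B : C,
    (β_ (T.obj A) (T.obj B)).hom ≫ φ B A = φ A B ≫ T.map (β_ A B).hom
  η_tensor : ∀ A B : C, (T.η.app A ⊗ₘ T.η.app B) ≫ φ A B = T.η.app (A ⊗ B)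
  η_unit : ε = T.η.app (𝟙_ C)
  μ_tensor : ∀ A B : C,
    φ (T.obj A) (T.obj B) ≫ T.map (φ A B) ≫ T.μ.app (A ⊗ B)
      = (T.μ.app A ⊗ₘ T.μ.app B) ≫ φ A B
  μ_unit : ε ≫ T.map ε ≫ T.μ.app (𝟙_ C) = ε

/-- for objects `Z₁, Z₂` of `V`, the morphism
`q = μ ∘ Tφ : T(TZ₁ ⊗ TZ₂) ⟶ T(Z₁ ⊗ Z₂)` coequalizes `α = T(μ ⊗ μ)` and
`β = μ ∘ Tφ : T(T²Z₁ ⊗ T²Z₂) ⟶ T(TZ₁ ⊗ TZ₂)`, and `s = T(η ⊗ η)`,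
`t = T(Tη ⊗ Tη)` exhibit `q` as a split coequalizer of `α` and `β`; in particular `q`
is the coequalizer of `α` and `β`. -/
theorem tensor_of_frees_split_coequalizer {V : Type u} [Category.{v} V]
    [MonoidalCategory V] [SymmetricCategory V]
    (T : Monad V) (M : SymMonoidalMonadStr V T) (Z₁ Z₂ : V) :
    ∃ w : T.map (T.μ.app Z₁ ⊗ₘ T.μ.app Z₂)
          ≫ (T.map (M.φ Z₁ Z₂) ≫ T.μ.app (Z₁ ⊗ Z₂))
        = (T.map (M.φ (T.obj Z₁) (T.obj Z₂)) ≫ T.μ.app (T.obj Z₁ ⊗ T.obj Z₂))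
          ≫ (T.map (M.φ Z₁ Z₂) ≫ T.μ.app (Z₁ ⊗ Z₂)),
      (T.map (T.η.app Z₁ ⊗ₘ T.η.app Z₂) ≫ (T.map (M.φ Z₁ Z₂) ≫ T.μ.app (Z₁ ⊗ Z₂))
          = 𝟙 (T.obj (Z₁ ⊗ Z₂))) ∧
      (T.map (T.map (T.η.app Z₁) ⊗ₘ T.map (T.η.app Z₂))
          ≫ T.map (T.μ.app Z₁ ⊗ₘ T.μ.app Z₂) = 𝟙 (T.obj (T.obj Z₁ ⊗ T.obj Z₂))) ∧
      (T.map (T.map (T.η.app Z₁) ⊗ₘ T.map (T.η.app Z₂))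
          ≫ (T.map (M.φ (T.obj Z₁) (T.obj Z₂)) ≫ T.μ.app (T.obj Z₁ ⊗ T.obj Z₂))
        = (T.map (M.φ Z₁ Z₂) ≫ T.μ.app (Z₁ ⊗ Z₂))
          ≫ T.map (T.η.app Z₁ ⊗ₘ T.η.app Z₂)) ∧
      Nonempty (IsColimit (Cofork.ofπ (T.map (M.φ Z₁ Z₂) ≫ T.μ.app (Z₁ ⊗ Z₂)) w)) := by
  have hw : T.map (T.μ.app Z₁ ⊗ₘ T.μ.app Z₂)
          ≫ (T.map (M.φ Z₁ Z₂) ≫ T.μ.app (Z₁ ⊗ Z₂))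
        = (T.map (M.φ (T.obj Z₁) (T.obj Z₂)) ≫ T.μ.app (T.obj Z₁ ⊗ T.obj Z₂))
          ≫ (T.map (M.φ Z₁ Z₂) ≫ T.μ.app (Z₁ ⊗ Z₂)) := by
    have h1 : T.map ((T.μ.app Z₁ ⊗ₘ T.μ.app Z₂) ≫ M.φ Z₁ Z₂) ≫ T.μ.app (Z₁ ⊗ Z₂)
        = T.map (M.φ (T.obj Z₁) (T.obj Z₂) ≫ T.map (M.φ Z₁ Z₂) ≫ T.μ.app (Z₁ ⊗ Z₂))
            ≫ T.μ.app (Z₁ ⊗ Z₂) := by rw [M.μ_tensor]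
    have h2 := T.μ.naturality (M.φ Z₁ Z₂)
    have h3 := T.assoc (Z₁ ⊗ Z₂)
    simp only [Functor.map_comp, Category.assoc, Functor.comp_map, Functor.comp_obj,
      Functor.id_obj, Functor.id_map] at h1 h2 h3 ⊢
    rw [h1, h3, ← Category.assoc (T.map (T.map (M.φ Z₁ Z₂))), h2, Category.assoc]
  have hs : T.map (T.η.app Z₁ ⊗ₘ T.η.app Z₂) ≫ (T.map (M.φ Z₁ Z₂) ≫ T.μ.app (Z₁ ⊗ Z₂))
      = 𝟙 (T.obj (Z₁ ⊗ Z₂)) := by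
    rw [← Category.assoc, ← T.map_comp, M.η_tensor]
    exact T.right_unit (Z₁ ⊗ Z₂)
  have ht : T.map (T.map (T.η.app Z₁) ⊗ₘ T.map (T.η.app Z₂))
      ≫ T.map (T.μ.app Z₁ ⊗ₘ T.μ.app Z₂) = 𝟙 (T.obj (T.obj Z₁ ⊗ T.obj Z₂)) := by
    rw [← T.map_comp, tensorHom_comp_tensorHom]
    have h1 := T.right_unit Z₁
    have h2 := T.right_unit Z₂
    simp only [Functor.id_obj, NatTrans.id_app] at h1 h2
    rw [h1, h2]
    simp
  have hst : T.map (T.map (T.η.app Z₁) ⊗ₘ T.map (T.η.app Z₂))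
          ≫ (T.map (M.φ (T.obj Z₁) (T.obj Z₂)) ≫ T.μ.app (T.obj Z₁ ⊗ T.obj Z₂))
        = (T.map (M.φ Z₁ Z₂) ≫ T.μ.app (Z₁ ⊗ Z₂))
          ≫ T.map (T.η.app Z₁ ⊗ₘ T.η.app Z₂) := by
    have h1 := M.φ_natural (T.η.app Z₁) (T.η.app Z₂)
    have h2 := T.μ.naturality (T.η.app Z₁ ⊗ₘ T.η.app Z₂)
    simp only [Functor.comp_map, Functor.comp_obj, Functor.id_obj, Functor.id_map] at h1 h2
    rw [← Category.assoc, ← T.map_comp, h1, T.map_comp, Category.assoc, h2,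
      Category.assoc]
  refine ⟨hw, hs, ht, hst, ⟨Cofork.IsColimit.mk' _ fun s =>
    ⟨T.map (T.η.app Z₁ ⊗ₘ T.η.app Z₂) ≫ s.π, ?_, ?_⟩⟩⟩
  · have hc := s.condition
    dsimp only [Cofork.ofπ_pt, Cofork.π_ofπ] at *
    rw [← Category.assoc, ← hst, Category.assoc, ← hc,
      ← Category.assoc, ht]
    simp
  · intro m hm
    dsimp only [Cofork.ofπ_pt, Cofork.π_ofπ] at *
    rw [← hm, ← Category.assoc, ← Category.assoc, Category.assoc (T.map _), hs,
      Category.id_comp]
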